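/- More generally, let q < 2^n have binary expansion q = Σ_{k=1}^{n} ε_k 2^{n−k} with ε_k ∈ {0,1}, and let c be the bidiagonal matrix (diagonal 2, superdiagonal −1) with the vector (ε_1,...,ε_n) subtracted from its first column. Then det c = 2^n − q. -/

import Mathlib

private lemma subm_eq (m : ℕ) (ε : Fin (m+2) → ℤ) :
    (Matrix.submatrix (fun i j : Fin (m+2) =>
        (if i = j then (2:ℤ) else if (j : ℕ) = (i : ℕ) + 1 then -1 else 0)
          - (if (j : ℕ) = 0 then ε i else 0)) Fin.succ ((0:Fin (m+1)).succ.succAbove))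
      = (fun i j : Fin (m+1) => (if i = j then (2:ℤ) else if (j : ℕ) = (i : ℕ) + 1 then -1 else 0)
          - (if (j : ℕ) = 0 then (if (i:ℕ) = 0 then ε 1 + 2 else ε i.succ) else 0)) := by
  funext i j
  rcases Fin.eq_zero_or_eq_succ j with rfl | ⟨j, rfl⟩
  · have h0 : (0:Fin (m+1)).succ.succAbove 0 = 0 := rfl
    erw [Matrix.submatrix_apply]; rw [h0]
    simp only [Fin.val_zero, if_pos rfl]
    rcases Nat.eq_zero_or_pos (i:ℕ) with h | h
    · have : i = 0 := Fin.ext h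
      subst this
      simp [Fin.ext_iff]
    · simp [Fin.ext_iff, h.ne', Fin.val_succ]
  · have h0 : (0:Fin (m+1)).succ.succAbove j.succ = j.succ.succ := by
      simp [Fin.succAbove, Fin.lt_def]
    erw [Matrix.submatrix_apply]; rw [h0]
    simp [Fin.succ_inj, Fin.val_succ]

private lemma aux (n : ℕ) (ε : Fin n → ℤ) :
    Matrix.det (fun i j : Fin n =>
      (if i = j then (2 : ℤ) else if (j : ℕ) = (i : ℕ) + 1 then -1 else 0)
        - (if (j : ℕ) = 0 then ε i else 0))
      = 2 ^ n - ∑ i : Fin n, ε i * 2 ^ (n - 1 - (i : ℕ)) := by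
  induction n with
  | zero => erw [Matrix.det_isEmpty]; simp
  | succ m ih =>
    erw [Matrix.det_succ_row_zero]; rw [Fin.sum_univ_succ]
    simp only [Fin.val_zero, Fin.val_succ, Fin.succAbove_zero, pow_zero, one_mul]
    have h1 : (Matrix.submatrix (fun i j : Fin (m+1) =>
        (if i = j then (2:ℤ) else if (j : ℕ) = (i : ℕ) + 1 then -1 else 0)
          - (if (j : ℕ) = 0 then ε i else 0)) Fin.succ Fin.succ).det = 2 ^ m := by
      rw [show (Matrix.submatrix (fun i j : Fin (m+1) =>
        (if i = j then (2:ℤ) else if (j : ℕ) = (i : ℕ) + 1 then -1 else 0)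
          - (if (j : ℕ) = 0 then ε i else 0)) Fin.succ Fin.succ)
        = (fun i j : Fin m => (if i = j then (2:ℤ) else if (j : ℕ) = (i : ℕ) + 1 then -1 else 0)
          - (if (j : ℕ) = 0 then (fun _ : Fin m => (0:ℤ)) i else 0)) from ?_]
      · rw [ih (fun _ => 0)]; simp
      · funext i j
        erw [Matrix.submatrix_apply]
        simp [Fin.succ_inj, Fin.val_succ]
    rw [h1]
    cases m with
    | zero => simp
    | succ k =>
      rw [Fin.sum_univ_succ]
      have hz : ∀ x : Fin k, ((-1:ℤ)) ^ ((x.succ:ℕ) + 1) *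
          ((if (0:Fin (k+2)) = x.succ.succ then (2:ℤ) else if (x.succ:ℕ) + 1 = 0 + 1 then -1 else 0)
            - if (x.succ:ℕ) + 1 = 0 then ε 0 else 0) * (Matrix.submatrix
              (fun i j : Fin (k+2) => (if i = j then (2:ℤ) else if (j:ℕ) = (i:ℕ) + 1 then -1 else 0)
                - if (j:ℕ) = 0 then ε i else 0) Fin.succ x.succ.succ.succAbove).det = 0 := by
        intro x
        have : (0:Fin (k+2)) ≠ x.succ.succ := (Fin.succ_ne_zero _).symm
        simp [this, Fin.val_succ]
      erw [Finset.sum_congr rfl (fun x _ => hz x)]; rw [Finset.sum_const, smul_zero, add_zero]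
      rw [subm_eq k ε, ih]
      have hne : ((0 : Fin (k+1+1)) = Fin.succ 0) = False := by
        simp [(Fin.succ_ne_zero (0 : Fin (k+1))).symm]
      simp only [Fin.sum_univ_succ, Fin.val_zero, Fin.val_succ, Fin.succ_ne_zero,
        Nat.succ_sub_succ, Nat.sub_zero, Nat.add_sub_cancel, if_true, if_pos rfl, hne, if_false,
        if_neg (by omega : ¬(0:ℕ) = 0 + 1), if_neg (Nat.succ_ne_zero 0),
        if_neg (fun x => Nat.succ_ne_zero _ ‹_›), Fin.succ_zero_eq_one, reduceIte,
        pow_zero, pow_succ]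
      have h01 : ¬ ((0 : Fin (k+1+1)) = 1) := by simp [Fin.ext_iff]
      rw [if_neg h01]
      split_ifs <;> simp_all <;> ring

/-- Let `q = Σ ε_i 2^{n-1-i}` with binary digits `ε_i ∈ {0,1}`. Subtracting the
vector `ε` from the first column of the bidiagonal matrix (diagonal `2`,
superdiagonal `-1`) yields a matrix of determinant `2^n - q`. -/
theorem stmt14 (n : ℕ) (ε : Fin n → ℤ) (hε : ∀ i, ε i = 0 ∨ ε i = 1) :
    Matrix.det (fun i j : Fin n =>
      (if i = j then (2 : ℤ) else if (j : ℕ) = (i : ℕ) + 1 then -1 else 0)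
        - (if (j : ℕ) = 0 then ε i else 0))
      = 2 ^ n - ∑ i : Fin n, ε i * 2 ^ (n - 1 - (i : ℕ)) :=
  aux n ε
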